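/- Let k be a field of characteristic 2, V a finite-dimensional k-vector space, and B a nondegenerate alternating bilinear form on V. Let T be a subgroup of GL(V) preserving B with a weight decomposition V = ⊕_{i∈I} V_i (weights pairwise distinct) having r := |I| ≥ 2 weight spaces, and let u ∈ GL(V) be a unipotent automorphism with a single Jordan block which preserves B and normalizes T. Then: each weight space V_i is totally isotropic (B vanishes on V_i × V_i); u permutes the weight spaces transitively, so r is a power of 2 (in particular even); and the weight spaces can be enumerated as V₁, …, V_r so that u maps V_i onto V_{i+1} (indices mod r) and B(V_i, V_j) = 0 unless j ≡ i + r/2 (mod r), giving an orthogonal decomposition V = (V₁ ⊕ V_{r/2+1}) ⊥ ⋯ ⊥ (V_{r/2} ⊕ V_r). -/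

import Mathlib

open Module

/-- A nonzero vector of `ker N` inside any set closed under `N`, for nilpotent `N`. -/
lemma aux_kernel_vec {k V : Type*} [Field k] [AddCommGroup V] [Module k V]
    (N : Module.End k V) (hnil : IsNilpotent N) {x : V} (hx : x ≠ 0) :
    ∃ m : ℕ, (N ^ m) x ≠ 0 ∧ N ((N ^ m) x) = 0 := by
  obtain ⟨e, he⟩ := hnil
  have hP : ∃ m, (N ^ m) x = 0 := ⟨e, by simp [he]⟩
  classical
  set m0 := Nat.find hP with hm0
  have hm0pos : 0 < m0 := by
    rcases Nat.eq_zero_or_pos m0 with h | h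
    · exfalso; have := Nat.find_spec hP; rw [← hm0, h] at this; simp at this; exact hx this
    · exact h
  refine ⟨m0 - 1, ?_, ?_⟩
  · have := Nat.find_min hP (m := m0 - 1) (by omega)
    simpa using this
  · have : (N ^ m0) x = 0 := Nat.find_spec hP
    have hsucc : m0 - 1 + 1 = m0 := by omega
    calc N ((N ^ (m0 - 1)) x) = (N ^ (m0 - 1 + 1)) x := by
          rw [pow_succ']; rfl
      _ = 0 := by rw [hsucc]; exact this

/-- For a nilpotent endomorphism with a single Jordan block, the kernel is a line. -/
lemma aux_ker_line {k V : Type*} [Field k] [AddCommGroup V] [Module k V] [FiniteDimensional k V]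
    (N : Module.End k V) (hnil : IsNilpotent N)
    (hreg : N ^ (Module.finrank k V - 1) ≠ 0)
    {w w' : V} (hw : N w = 0) (hw' : N w' = 0) (hwn : w ≠ 0) :
    ∃ c : k, w' = c • w := by
  classical
  set n := Module.finrank k V with hn
  have hNn : N ^ n = 0 := by
    have h := hnil.charpoly_eq_X_pow_finrank
    have h2 := N.aeval_self_charpoly
    rwa [h, map_pow, Polynomial.aeval_X] at h2
  have hn1 : 1 ≤ n := by
    by_contra h
    have : n = 0 := by omega
    rw [this] at hNn; simp at hNn
    exact hreg (by rw [this]; simpa using hNn)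
  obtain ⟨x, hxn⟩ : ∃ x : V, (N ^ (n - 1)) x ≠ 0 := by
    by_contra h
    push_neg at h
    exact hreg (LinearMap.ext fun x => h x)
  -- the iterates N^i x, i < n, are linearly independent
  have hindep : LinearIndependent k (fun i : Fin n => (N ^ (i : ℕ)) x) := by
    rw [Fintype.linearIndependent_iff]
    intro g hg
    by_contra hcon
    push_neg at hcon
    obtain ⟨i, hi⟩ := hcon
    -- choose minimal bad index
    have hPex : ∃ j : ℕ, ∃ hj : j < n, g ⟨j, hj⟩ ≠ 0 := ⟨i, i.2, hi⟩
    set j0 := Nat.find hPex with hj0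
    obtain ⟨hj0lt, hj0ne⟩ := Nat.find_spec hPex
    have hmin : ∀ j (hj : j < n), j < j0 → g ⟨j, hj⟩ = 0 := by
      intro j hj hjlt
      by_contra hne
      exact absurd (Nat.find_min' hPex ⟨hj, hne⟩) (by omega)
    have happ := congrArg (fun v => (N ^ (n - 1 - j0)) v) hg
    simp only [map_sum, map_smul, map_zero] at happ
    have hterm : ∀ i : Fin n, g i • (N ^ (n - 1 - j0)) ((N ^ (i : ℕ)) x)
        = if i = (⟨j0, hj0lt⟩ : Fin n) then g i • (N ^ (n - 1)) x else 0 := by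
      intro i
      rcases lt_trichotomy (i : ℕ) j0 with h | h | h
      · rw [hmin i i.2 h]
        simp only [zero_smul, ite_self]
      · rw [if_pos (Fin.ext h)]
        congr 1
        rw [← Module.End.mul_apply, ← pow_add]
        congr 2
        omega
      · rw [if_neg (by intro hcontra; rw [hcontra] at h; simp at h)]
        have : (N ^ (n - 1 - j0)) ((N ^ (i : ℕ)) x) = ((N ^ (n - 1 - j0 + (i:ℕ)))) x := by
          rw [← Module.End.mul_apply, ← pow_add]
        rw [this]
        have hge : n ≤ n - 1 - j0 + (i : ℕ) := by omega
        have : N ^ (n - 1 - j0 + (i : ℕ)) = N ^ (n - 1 - j0 + (i:ℕ) - n) * N ^ n := by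
          rw [← pow_add]; congr 1; omega
        rw [this, hNn]
        simp
    rw [Finset.sum_congr rfl (fun i _ => hterm i)] at happ
    rw [Finset.sum_ite_eq' Finset.univ (⟨j0, hj0lt⟩ : Fin n)] at happ
    simp only [Finset.mem_univ, if_true] at happ
    exact hj0ne (by
      rcases smul_eq_zero.mp happ with h | h
      · exact h
      · exact absurd h hxn)
  -- hence the kernel of N has dimension at most 1
  have hker : Module.finrank k (LinearMap.ker N) ≤ 1 := by
    have hrange : n - 1 ≤ Module.finrank k (LinearMap.range N) := by
      have hind2 : LinearIndependent k
          (fun i : Fin (n-1) => (⟨(N ^ ((i : ℕ) + 1)) x, by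
            exact ⟨(N ^ (i:ℕ)) x, by rw [← Module.End.mul_apply, ← pow_succ']⟩⟩ : LinearMap.range N)) := by
        have hcomp : LinearIndependent k (fun i : Fin (n-1) => (N ^ ((i : ℕ) + 1)) x) := by
          have := hindep.comp (fun i : Fin (n-1) => (⟨(i : ℕ) + 1, by omega⟩ : Fin n))
            (fun a b hab => by
              simp only [Fin.mk.injEq, Nat.add_right_cancel_iff] at hab
              exact Fin.ext hab)
          exact this
        exact hcomp.of_comp (LinearMap.range N).subtype
      simpa using hind2.fintype_card_le_finrank
    have hrn := LinearMap.finrank_range_add_finrank_ker N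
    omega
  have hwker : w ∈ LinearMap.ker N := hw
  have hspan : (k ∙ w) = LinearMap.ker N := by
    apply Submodule.eq_of_le_of_finrank_le
    · rwa [Submodule.span_singleton_le_iff_mem]
    · rw [finrank_span_singleton hwn]; exact hker
  have : w' ∈ (k ∙ w) := by rw [hspan]; exact hw'
  obtain ⟨c, hc⟩ := Submodule.mem_span_singleton.mp this
  exact ⟨c, hc.symm⟩


/-- Proposition `prop:torus CD`.  Let `k` have characteristic `2`,
`B` a nondegenerate alternating bilinear form on `V`, `T ≤ GL(V)` a subgroup
preserving `B` with a weight decomposition `V = ⊕ᵢ Vᵢ` into `r ≥ 2` weight spaces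
(pairwise distinct weights), and `u` a unipotent automorphism with a single Jordan
block preserving `B` and normalising `T`.  Then each `Vᵢ` is totally isotropic, `u`
permutes the weight spaces transitively in a cycle (so `r` is a power of `2`), and
after enumerating them cyclically `B(Vₘ, V_l) = 0` unless `l ≡ m + r/2 (mod r)`,
giving an orthogonal decomposition into the pairs `Vₘ ⊕ V_{m + r/2}`. -/
theorem stmt14 {k V : Type*} [Field k] [CharP k 2] [AddCommGroup V] [Module k V]
    [FiniteDimensional k V]
    (B : V →ₗ[k] V →ₗ[k] k)
    (halt : ∀ v : V, B v v = 0)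
    (hnd : ∀ v : V, (∀ w : V, B v w = 0) → v = 0)
    (T : Subgroup (V ≃ₗ[k] V))
    (hT : ∀ t ∈ T, ∀ v w : V, B (t v) (t w) = B v w)
    {I : Type*} [Fintype I] [DecidableEq I]
    (Vi : I → Submodule k V) (hne : ∀ i, Vi i ≠ ⊥)
    (hdirect : DirectSum.IsInternal Vi)
    (χ : I → ↥T → k)
    (hχ : ∀ i, ∀ t : ↥T, ∀ v ∈ Vi i, (t : V ≃ₗ[k] V) v = χ i t • v)
    (hdist : ∀ i j, i ≠ j → ∃ t : ↥T, χ i t ≠ χ j t)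
    (r : ℕ) (hr : r = Fintype.card I) (hr2 : 2 ≤ r)
    (u : V ≃ₗ[k] V)
    (hu : IsNilpotent ((u : Module.End k V) - 1))
    (hreg : ((u : Module.End k V) - 1) ^ (Module.finrank k V - 1) ≠ 0)
    (huB : ∀ v w : V, B (u v) (u w) = B v w)
    (hnorm : ∀ t : V ≃ₗ[k] V, t ∈ T ↔ u * t * u⁻¹ ∈ T) :
    (∀ i, ∀ v ∈ Vi i, ∀ w ∈ Vi i, B v w = 0) ∧
    (∃ s : ℕ, r = 2 ^ s) ∧
    ∃ e : ZMod r ≃ I,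
      (∀ m : ZMod r, Submodule.map (u : V →ₗ[k] V) (Vi (e m)) = Vi (e (m + 1))) ∧
      ∀ m l : ZMod r, l ≠ m + ((r / 2 : ℕ) : ZMod r) →
        ∀ v ∈ Vi (e m), ∀ w ∈ Vi (e l), B v w = 0 := by
  classical
  letI : DirectSum.Decomposition Vi := hdirect.chooseDecomposition
  set N : Module.End k V := (u : Module.End k V) - 1 with hNdef
  -- projections onto the weight spaces
  set πl : I → V →ₗ[k] V := fun i =>
    (Vi i).subtype ∘ₗ (DFinsupp.lapply i) ∘ₗ (DirectSum.decomposeLinearEquiv Vi).toLinearMap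
    with hπldef
  have hπval : ∀ (i : I) (v : V), πl i v = ↑(DirectSum.decompose Vi v i) := fun i v => rfl
  have hπmem : ∀ (i : I) (v : V), πl i v ∈ Vi i := fun i v => (DirectSum.decompose Vi v i).2
  have hπsame : ∀ {i : I} {v : V}, v ∈ Vi i → πl i v = v := by
    intro i v hv; rw [hπval]; exact DirectSum.decompose_of_mem_same Vi hv
  have hπne : ∀ {i j : I} {v : V}, v ∈ Vi i → i ≠ j → πl j v = 0 := by
    intro i j v hv hij; rw [hπval]; exact DirectSum.decompose_of_mem_ne Vi hv hij
  have hsum : ∀ v : V, ∑ i, πl i v = v := by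
    intro v
    have h := DirectSum.sum_support_decompose Vi v
    calc ∑ i, πl i v
        = ∑ i ∈ (DirectSum.decompose Vi v).support, πl i v := by
          refine (Finset.sum_subset (Finset.subset_univ _) ?_).symm
          intro i _ hi
          rw [hπval]
          rw [DFinsupp.notMem_support_iff] at hi
          rw [hi]; rfl
      _ = v := h
  -- separation lemmas
  have hχinj : ∀ a b : I, (∀ t : ↥T, χ a t = χ b t) → a = b := by
    intro a b hab
    by_contra hne'
    obtain ⟨t, ht⟩ := hdist a b hne'
    exact ht (hab t)
  have hsep : ∀ {v : V} {a b : I}, v ≠ 0 → v ∈ Vi a → v ∈ Vi b → a = b := by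
    intro v a b hv ha hb
    exact DirectSum.degree_eq_of_mem_mem Vi ha hb hv
  -- the key uniqueness-of-weight lemma
  have key : ∀ (v : V), v ≠ 0 → ∀ (c : ↥T → k), (∀ t : ↥T, (t : V ≃ₗ[k] V) v = c t • v) →
      ∃ i, v ∈ Vi i ∧ ∀ t, c t = χ i t := by
    intro v hv c hc
    have hcomp : ∀ (i : I) (t : ↥T), c t • πl i v = χ i t • πl i v := by
      intro i t
      have hv1 : (t : V ≃ₗ[k] V) v = ∑ j, χ j t • πl j v := by
        conv_lhs => rw [← hsum v]
        rw [map_sum]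
        exact Finset.sum_congr rfl fun j _ => hχ j t _ (hπmem j v)
      have h2 : c t • v = ∑ j, χ j t • πl j v := by rw [← hc t, hv1]
      have h3 := congrArg (πl i) h2
      rw [map_smul, map_sum] at h3
      have h4 : ∀ j ∈ Finset.univ, πl i (χ j t • πl j v)
          = if j = i then χ i t • πl i v else 0 := by
        intro j _
        by_cases hji : j = i
        · subst hji
          rw [if_pos rfl, map_smul, hπsame (hπmem j v)]
        · rw [if_neg hji, map_smul, hπne (hπmem j v) hji, smul_zero]
      rw [Finset.sum_congr rfl h4, Finset.sum_ite_eq' Finset.univ i] at h3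
      simpa using h3
    obtain ⟨i, hi⟩ : ∃ i, πl i v ≠ 0 := by
      by_contra hcon
      push_neg at hcon
      apply hv
      rw [← hsum v]
      simp [hcon]
    have hct : ∀ t, c t = χ i t := by
      intro t
      have := hcomp i t
      have h5 : (c t - χ i t) • πl i v = 0 := by rw [sub_smul, this, sub_self]
      rcases smul_eq_zero.mp h5 with h | h
      · exact sub_eq_zero.mp h
      · exact absurd h hi
    refine ⟨i, ?_, hct⟩
    have hvson : ∀ j, j ≠ i → πl j v = 0 := by
      intro j hji
      by_contra hj0
      have hct' : ∀ t, c t = χ j t := by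
        intro t
        have := hcomp j t
        have h5 : (c t - χ j t) • πl j v = 0 := by rw [sub_smul, this, sub_self]
        rcases smul_eq_zero.mp h5 with h | h
        · exact sub_eq_zero.mp h
        · exact absurd h hj0
      exact hji (hχinj j i fun t => by rw [← hct' t, hct t])
    have : v = πl i v := by
      conv_lhs => rw [← hsum v]
      exact Finset.sum_eq_single i (fun b _ hb => hvson b hb)
        (fun h => absurd (Finset.mem_univ i) h)
    rw [this]; exact hπmem i v
  -- conjugation maps on T
  have hmemT : ∀ t : ↥T, (u⁻¹ * (t : V ≃ₗ[k] V) * u) ∈ T := by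
    intro t
    refine (hnorm (u⁻¹ * (t : V ≃ₗ[k] V) * u)).mpr ?_
    have : u * (u⁻¹ * (t : V ≃ₗ[k] V) * u) * u⁻¹ = (t : V ≃ₗ[k] V) := by group
    rw [this]
    exact t.2
  have hmemT' : ∀ t : ↥T, (u * (t : V ≃ₗ[k] V) * u⁻¹) ∈ T := fun t => (hnorm t).mp t.2
  set cT : ↥T → ↥T := fun t => ⟨u⁻¹ * (t : V ≃ₗ[k] V) * u, hmemT t⟩ with hcTdef
  set cT' : ↥T → ↥T := fun t => ⟨u * (t : V ≃ₗ[k] V) * u⁻¹, hmemT' t⟩ with hcT'def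
  have hcc' : ∀ t, cT (cT' t) = t := by
    intro t; apply Subtype.ext
    show u⁻¹ * (u * (t : V ≃ₗ[k] V) * u⁻¹) * u = (t : V ≃ₗ[k] V)
    group
  have hc'c : ∀ t, cT' (cT t) = t := by
    intro t; apply Subtype.ext
    show u * (u⁻¹ * (t : V ≃ₗ[k] V) * u) * u⁻¹ = (t : V ≃ₗ[k] V)
    group
  -- action of T on images under u
  have hact : ∀ (i : I) (t : ↥T) (v : V), v ∈ Vi i →
      (t : V ≃ₗ[k] V) (u v) = χ i (cT t) • (u v) := by
    intro i t v hv
    have h1 : u⁻¹ ((t : V ≃ₗ[k] V) (u v)) = χ i (cT t) • v := hχ i (cT t) v hv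
    calc (t : V ≃ₗ[k] V) (u v) = u (u⁻¹ ((t : V ≃ₗ[k] V) (u v))) :=
          (u.apply_symm_apply _).symm
      _ = u (χ i (cT t) • v) := by rw [h1]
      _ = χ i (cT t) • (u v) := map_smul u _ _
  have hact' : ∀ (i : I) (t : ↥T) (v : V), v ∈ Vi i →
      (t : V ≃ₗ[k] V) (u⁻¹ v) = χ i (cT' t) • (u⁻¹ v) := by
    intro i t v hv
    have h1 : u ((t : V ≃ₗ[k] V) (u⁻¹ v)) = χ i (cT' t) • v := hχ i (cT' t) v hv
    calc (t : V ≃ₗ[k] V) (u⁻¹ v) = u⁻¹ (u ((t : V ≃ₗ[k] V) (u⁻¹ v))) :=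
          (u.symm_apply_apply _).symm
      _ = u⁻¹ (χ i (cT' t) • v) := by rw [h1]
      _ = χ i (cT' t) • (u⁻¹ v) := map_smul (u⁻¹ : V ≃ₗ[k] V) _ _
  -- the permutation σ induced by u, and its inverse σ'
  have hσex : ∀ i : I, ∃ j : I, (∀ v, v ∈ Vi i → u v ∈ Vi j) ∧ (∀ t, χ j t = χ i (cT t)) := by
    intro i
    obtain ⟨v0, hv0m, hv0⟩ := Submodule.exists_mem_ne_zero_of_ne_bot (hne i)
    have hu0 : u v0 ≠ 0 := fun h => hv0 (by simpa using congrArg (⇑u⁻¹) h)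
    obtain ⟨j, hjm, hjc⟩ := key (u v0) hu0 (fun t => χ i (cT t)) (fun t => hact i t v0 hv0m)
    refine ⟨j, ?_, fun t => (hjc t).symm⟩
    intro v hv
    by_cases hz : v = 0
    · rw [hz]; simp
    have huv : u v ≠ 0 := fun h => hz (by simpa using congrArg (⇑u⁻¹) h)
    obtain ⟨j', hj'm, hj'c⟩ := key (u v) huv (fun t => χ i (cT t)) (fun t => hact i t v hv)
    have : j' = j := hχinj _ _ (fun t => by rw [← hj'c t, hjc t])
    exact this ▸ hj'm
  have hσ'ex : ∀ i : I, ∃ j : I, (∀ v, v ∈ Vi i → u⁻¹ v ∈ Vi j) ∧ (∀ t, χ j t = χ i (cT' t)) := by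
    intro i
    obtain ⟨v0, hv0m, hv0⟩ := Submodule.exists_mem_ne_zero_of_ne_bot (hne i)
    have hu0 : u⁻¹ v0 ≠ 0 := fun h => hv0 (by simpa using congrArg (⇑u) h)
    obtain ⟨j, hjm, hjc⟩ := key (u⁻¹ v0) hu0 (fun t => χ i (cT' t)) (fun t => hact' i t v0 hv0m)
    refine ⟨j, ?_, fun t => (hjc t).symm⟩
    intro v hv
    by_cases hz : v = 0
    · rw [hz]; simp
    have huv : u⁻¹ v ≠ 0 := fun h => hz (by simpa using congrArg (⇑u) h)
    obtain ⟨j', hj'm, hj'c⟩ := key (u⁻¹ v) huv (fun t => χ i (cT' t)) (fun t => hact' i t v hv)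
    have : j' = j := hχinj _ _ (fun t => by rw [← hj'c t, hjc t])
    exact this ▸ hj'm
  choose σ hσmap hσχ using hσex
  choose σ' hσ'map hσ'χ using hσ'ex
  have hσ'σ : ∀ i, σ' (σ i) = i := by
    intro i
    apply hχinj
    intro t
    rw [hσ'χ, hσχ, hcc']
  have hσσ' : ∀ i, σ (σ' i) = i := by
    intro i
    apply hχinj
    intro t
    rw [hσχ, hσ'χ, hc'c]
  have hmap : ∀ i, Submodule.map (u : V →ₗ[k] V) (Vi i) = Vi (σ i) := by
    intro i
    apply le_antisymm
    · rintro _ ⟨v, hv, rfl⟩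
      exact hσmap i v hv
    · intro v hv
      refine ⟨u⁻¹ v, ?_, u.apply_symm_apply v⟩
      have := hσ'map (σ i) v hv
      rwa [hσ'σ] at this
  -- iterates
  have hiter : ∀ (m : ℕ) (i : I) (v : V), v ∈ Vi i → (⇑u)^[m] v ∈ Vi (σ^[m] i) := by
    intro m
    induction m with
    | zero => intro i v hv; simpa using hv
    | succ m ih =>
      intro i v hv
      rw [Function.iterate_succ_apply', Function.iterate_succ_apply']
      exact hσmap _ _ (ih i v hv)
  -- a nonzero vector somewhere
  have hcard : 0 < Fintype.card I := by omega
  obtain ⟨i₀⟩ : Nonempty I := Fintype.card_pos_iff.mp hcard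
  obtain ⟨z0, hz0m, hz0⟩ := Submodule.exists_mem_ne_zero_of_ne_bot (hne i₀)
  -- in characteristic 2, u^(2^M) = 1
  obtain ⟨M, hM⟩ : ∃ M : ℕ, ∀ v : V, (⇑u)^[2 ^ M] v = v := by
    have halg : Function.Injective (algebraMap k (Module.End k V)) := by
      intro a b hab
      have h1 := LinearMap.congr_fun hab z0
      simp only [Module.algebraMap_end_apply] at h1
      exact smul_left_injective k hz0 h1
    haveI : CharP (Module.End k V) 2 := charP_of_injective_algebraMap halg 2
    haveI : Fact (Nat.Prime 2) := ⟨Nat.prime_two⟩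
    obtain ⟨m, hm⟩ := hu
    refine ⟨m, ?_⟩
    have hle : m ≤ 2 ^ m := Nat.le_of_lt (Nat.lt_two_pow_self (n := m))
    have hzero : ((u : Module.End k V) - 1) ^ (2 ^ m) = 0 := by
      rw [hNdef] at hm
      exact pow_eq_zero_of_le hle hm
    have hsub : ((u : Module.End k V) - 1) ^ 2 ^ m
        = (u : Module.End k V) ^ 2 ^ m - 1 ^ 2 ^ m :=
      sub_pow_char_pow_of_commute 2 m (Commute.one_right _)
    have hupow : (u : Module.End k V) ^ 2 ^ m = 1 := by
      have := hsub.symm.trans hzero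
      rwa [one_pow, sub_eq_zero] at this
    intro v
    have hcoe : ((u ^ (2 ^ m) : V ≃ₗ[k] V) : Module.End k V)
        = (u : Module.End k V) ^ 2 ^ m :=
      map_pow (LinearEquiv.automorphismGroup.toLinearMapMonoidHom : (V ≃ₗ[k] V) →* _) u _
    have h2 : (u ^ (2 ^ m) : V ≃ₗ[k] V) v = v := by
      have := LinearMap.congr_fun (hcoe.trans hupow) v
      simpa using this
    rw [← LinearEquiv.pow_apply]
    exact h2
  -- σ^[2^M] = id
  have hσM : ∀ i : I, σ^[2 ^ M] i = i := by
    intro i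
    obtain ⟨v0, hv0m, hv0⟩ := Submodule.exists_mem_ne_zero_of_ne_bot (hne i)
    have h1 := hiter (2 ^ M) i v0 hv0m
    rw [hM v0] at h1
    exact (hsep hv0 h1 hv0m)
  have hfix : ∀ (c : ℕ) (a : I), σ^[2 ^ M * c] a = a := by
    intro c
    induction c with
    | zero => intro a; simp
    | succ c ih =>
      intro a
      have : 2 ^ M * (c + 1) = 2 ^ M * c + 2 ^ M := by ring
      rw [this, Function.iterate_add_apply, hσM, ih]
  have horb : ∀ a b : I, (∃ m, σ^[m] a = b) → ∃ m, σ^[m] b = a := by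
    rintro a b ⟨m, rfl⟩
    refine ⟨2 ^ M * (m + 1) - m, ?_⟩
    have h1 : σ^[2 ^ M * (m + 1) - m] (σ^[m] a) = σ^[2 ^ M * (m + 1)] a := by
      rw [← Function.iterate_add_apply]
      congr 1
      have : m ≤ 2 ^ M * (m + 1) := by nlinarith [Nat.one_le_two_pow (n := M)]
      omega
    rw [h1, hfix]
  -- transitivity of σ on I
  have hkervec : ∀ a : I, ∃ w : V, w ≠ 0 ∧ N w = 0 ∧
      ∀ i, (∀ m, σ^[m] a ≠ i) → πl i w = 0 := by
    intro a
    obtain ⟨x0, hx0m, hx0⟩ := Submodule.exists_mem_ne_zero_of_ne_bot (hne a)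
    obtain ⟨m, hm1, hm2⟩ := aux_kernel_vec N hu hx0
    have hNapp : ∀ y : V, N y = u y - y := by
      intro y; rw [hNdef]; simp [LinearMap.sub_apply]
    have hQstep : ∀ y : V, (∀ i, (∀ l, σ^[l] a ≠ i) → πl i y = 0) →
        ∀ i, (∀ l, σ^[l] a ≠ i) → πl i (u y) = 0 := by
      intro y hy i hiS
      have h1 : u y = ∑ j, u (πl j y) := by
        conv_lhs => rw [← hsum y]
        exact map_sum u _ _
      rw [h1, map_sum]
      apply Finset.sum_eq_zero
      intro j _
      by_cases hjS : ∃ l, σ^[l] a = j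
      · obtain ⟨l, hl⟩ := hjS
        have hmem := hσmap j (πl j y) (hπmem j y)
        refine hπne hmem ?_
        intro hcontra
        exact hiS (l + 1) (by
          rw [Function.iterate_succ_apply', hl, hcontra])
      · push_neg at hjS
        rw [hy j hjS]
        simp
    have hQ : ∀ l, ∀ i, (∀ m', σ^[m'] a ≠ i) → πl i ((N ^ l) x0) = 0 := by
      intro l
      induction l with
      | zero =>
        intro i hiS
        simp only [pow_zero, Module.End.one_apply]
        exact hπne hx0m (fun h => hiS 0 (by simpa using h))
      | succ l ih =>
        intro i hiS
        have h1 : (N ^ (l + 1)) x0 = u ((N ^ l) x0) - (N ^ l) x0 := by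
          rw [pow_succ', Module.End.mul_apply, hNapp]
        rw [h1, map_sub, hQstep _ ih i hiS, ih i hiS, sub_zero]
    exact ⟨(N ^ m) x0, hm1, hm2, fun i hi => hQ m i hi⟩
  have htrans : ∀ j : I, ∃ m, σ^[m] i₀ = j := by
    intro j
    by_contra hj
    push_neg at hj
    obtain ⟨w, hw0, hwk, hwS⟩ := hkervec i₀
    obtain ⟨w', hw'0, hw'k, hw'S⟩ := hkervec j
    obtain ⟨c, hc⟩ := aux_ker_line N hu hreg hwk hw'k hw0
    obtain ⟨i1, hi1⟩ : ∃ i1, πl i1 w' ≠ 0 := by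
      by_contra h
      push_neg at h
      apply hw'0
      rw [← hsum w']
      simp [h]
    have hi1orb : ∃ l, σ^[l] j = i1 := by
      by_contra h
      push_neg at h
      exact hi1 (hw'S i1 h)
    have hi1no : ∀ m', σ^[m'] i₀ ≠ i1 := by
      intro m' hm'
      obtain ⟨l', hl'⟩ := horb j i1 hi1orb
      exact hj (l' + m') (by rw [Function.iterate_add_apply, hm', hl'])
    have hzero : πl i1 w = 0 := hwS i1 hi1no
    rw [hc, map_smul, hzero, smul_zero] at hi1
    exact hi1 rfl
  -- minimal period of i₀ under σ is r
  set p := Function.minimalPeriod σ i₀ with hpdef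
  have hper2M : Function.IsPeriodicPt σ (2 ^ M) i₀ := hσM i₀
  have hppos : 0 < p := hper2M.minimalPeriod_pos (Nat.two_pow_pos M)
  have hpdvd : p ∣ 2 ^ M := hper2M.minimalPeriod_dvd
  have hbij : Function.Bijective (fun m : Fin p => σ^[(m : ℕ)] i₀) := by
    constructor
    · intro a b hab
      have := Function.iterate_injOn_Iio_minimalPeriod (f := σ) (x := i₀)
        (Set.mem_Iio.mpr a.2) (Set.mem_Iio.mpr b.2) hab
      exact Fin.ext this
    · intro j
      obtain ⟨m, hm⟩ := htrans j
      refine ⟨⟨m % p, Nat.mod_lt _ hppos⟩, ?_⟩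
      simp only
      rw [Function.iterate_mod_minimalPeriod_eq]
      exact hm
  have hpr : p = r := by
    have := Fintype.card_of_bijective hbij
    rw [Fintype.card_fin] at this
    omega
  have hitermod : ∀ a b : ℕ, a % r = b % r → σ^[a] i₀ = σ^[b] i₀ := by
    intro a b hab
    have h1 : σ^[a % p] i₀ = σ^[a] i₀ := Function.iterate_mod_minimalPeriod_eq
    have h2 : σ^[b % p] i₀ = σ^[b] i₀ := Function.iterate_mod_minimalPeriod_eq
    rw [← h1, ← h2, hpr, hab]
  haveI : NeZero r := ⟨by omega⟩
  haveI : Fact (1 < r) := ⟨by omega⟩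
  have heinj : Function.Injective (fun m : ZMod r => σ^[(m.val)] i₀) := by
    intro a b hab
    have h1 : a.val < p := hpr ▸ a.val_lt
    have h2 : b.val < p := hpr ▸ b.val_lt
    have := Function.iterate_injOn_Iio_minimalPeriod (f := σ) (x := i₀)
      (Set.mem_Iio.mpr h1) (Set.mem_Iio.mpr h2) hab
    calc a = ((a.val : ℕ) : ZMod r) := (ZMod.natCast_zmod_val a).symm
      _ = ((b.val : ℕ) : ZMod r) := by rw [this]
      _ = b := ZMod.natCast_zmod_val b
  have hesurj : Function.Surjective (fun m : ZMod r => σ^[(m.val)] i₀) := by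
    intro j
    obtain ⟨m, hm⟩ := htrans j
    refine ⟨(m : ZMod r), ?_⟩
    simp only
    rw [ZMod.val_natCast]
    rw [← hm]
    exact hitermod (m % r) m (Nat.mod_mod_of_dvd m dvd_rfl)
  set e : ZMod r ≃ I := Equiv.ofBijective _ ⟨heinj, hesurj⟩ with hedef
  have heval : ∀ m : ZMod r, e m = σ^[(m.val)] i₀ := fun m => rfl
  -- property: u maps e m to e (m+1)
  have hprop1 : ∀ m : ZMod r, Submodule.map (u : V →ₗ[k] V) (Vi (e m)) = Vi (e (m + 1)) := by
    intro m
    rw [hmap (e m)]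
    congr 1
    rw [heval, heval]
    have h1 : σ (σ^[m.val] i₀) = σ^[m.val + 1] i₀ :=
      (Function.iterate_succ_apply' σ m.val i₀).symm
    rw [h1]
    apply hitermod
    have hv1 : (1 : ZMod r).val = 1 := ZMod.val_one r
    have hva : (m + 1).val = (m.val + 1) % r := by rw [ZMod.val_add, hv1]
    rw [hva, Nat.mod_mod_of_dvd _ dvd_rfl]
  -- r is a power of two
  obtain ⟨s, hsle, hseq⟩ := (Nat.dvd_prime_pow Nat.prime_two).mp (hpr ▸ hpdvd)
  have hs1 : 1 ≤ s := by
    by_contra h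
    have : s = 0 := by omega
    rw [this] at hseq
    omega
  -- the pairing via B
  have hBchar : ∀ a b : I, ∀ v ∈ Vi a, ∀ w ∈ Vi b, B v w ≠ 0 →
      ∀ t : ↥T, χ a t * χ b t = 1 := by
    intro a b v hv w hw hB t
    have h := hT (t : V ≃ₗ[k] V) t.2 v w
    rw [hχ a t v hv, hχ b t w hw] at h
    simp only [map_smul, LinearMap.smul_apply, smul_eq_mul] at h
    have h2 : (χ a t * χ b t) * B v w = B v w := by
      rw [mul_comm (χ a t) (χ b t), mul_assoc]
      exact h
    have h3 : (χ a t * χ b t - 1) * B v w = 0 := by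
      rw [sub_mul, one_mul, h2, sub_self]
    rcases mul_eq_zero.mp h3 with h4 | h4
    · exact sub_eq_zero.mp h4
    · exact absurd h4 hB
  have hcomp : ∀ v : V, v ≠ 0 → ∃ b, ∃ w ∈ Vi b, B v w ≠ 0 := by
    intro v hv
    by_contra h'
    push_neg at h'
    apply hv
    apply hnd
    intro w
    conv_lhs => rw [← hsum w]
    rw [map_sum]
    apply Finset.sum_eq_zero
    intro b _
    exact h' b (πl b w) (hπmem b w)
  have hpairex : ∀ a : I, ∃ b : I, ∀ t, χ a t * χ b t = 1 := by
    intro a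
    obtain ⟨v0, hv0m, hv0⟩ := Submodule.exists_mem_ne_zero_of_ne_bot (hne a)
    obtain ⟨b, w, hw, hB⟩ := hcomp v0 hv0
    exact ⟨b, hBchar a b v0 hv0m w hw hB⟩
  have hpairuniq : ∀ a b b' : I, (∀ t, χ a t * χ b t = 1) → (∀ t, χ a t * χ b' t = 1) →
      b = b' := by
    intro a b b' hb hb'
    apply hχinj
    intro t
    have ha : χ a t ≠ 0 := by
      intro h
      have := hb t
      rw [h, zero_mul] at this
      exact zero_ne_one this
    exact mul_left_cancel₀ ha ((hb t).trans (hb' t).symm)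
  choose τ hτ using hpairex
  have hτσ : ∀ a, τ (σ a) = σ (τ a) := by
    intro a
    refine hpairuniq (σ a) _ _ (hτ (σ a)) ?_
    intro t
    rw [hσχ a t, hσχ (τ a) t]
    exact hτ a (cT t)
  have hτiter : ∀ (m : ℕ) (a : I), τ (σ^[m] a) = σ^[m] (τ a) := by
    intro m
    induction m with
    | zero => intro a; simp
    | succ m ih =>
      intro a
      rw [Function.iterate_succ_apply', Function.iterate_succ_apply', hτσ, ih]
  have hτinv : τ (τ i₀) = i₀ :=
    hpairuniq (τ i₀) _ _ (hτ (τ i₀)) (fun t => by rw [mul_comm]; exact hτ i₀ t)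
  obtain ⟨h, hh⟩ := htrans (τ i₀)
  have h2h : σ^[h + h] i₀ = i₀ := by
    rw [Function.iterate_add_apply, hh]
    have : σ^[h] (τ i₀) = τ (σ^[h] i₀) := (hτiter h i₀).symm
    rw [this, hh, hτinv]
  have hrdvd2h : r ∣ h + h := by
    have hper : Function.IsPeriodicPt σ (h + h) i₀ := h2h
    have := hper.minimalPeriod_dvd
    rwa [← hpdef, hpr] at this
  -- h % r = r / 2
  have hhmod : h % r = r / 2 := by
    set d := 2 ^ (s - 1) with hddef
    have hrd : r = 2 * d := by
      rw [hseq, hddef, ← pow_succ']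
      congr 1
      omega
    have hdh : d ∣ h := by
      have h2d : (2 * d) ∣ 2 * h := by
        rw [← hrd]
        have : 2 * h = h + h := by ring
        rw [this]
        exact hrdvd2h
      obtain ⟨q, hq⟩ := h2d
      exact ⟨q, Nat.eq_of_mul_eq_mul_left (show 0 < 2 by norm_num) (by rw [hq]; ring)⟩
    obtain ⟨q, hq⟩ := hdh
    have hmm : h % r = d * (q % 2) := by
      rw [hq, hrd, Nat.mul_comm 2 d, Nat.mul_mod_mul_left]
    have hq2 : q % 2 = 0 ∨ q % 2 = 1 := by omega
    have hdpos : 0 < d := Nat.two_pow_pos _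
    rcases hq2 with hq2 | hq2
    · -- h ≡ 0 mod r: all characters are trivial, contradiction
      exfalso
      have hh0 : h % r = 0 := by rw [hmm, hq2, mul_zero]
      have hτ0 : τ i₀ = i₀ := by
        rw [← hh]
        exact hitermod h 0 (by simpa using hh0)
      have hsq : ∀ a : k, a * a = 1 → a = 1 := by
        intro a ha
        have h2 : (2 : k) = 0 := by
          have := CharP.cast_eq_zero k 2
          simpa using this
        have h3 : (a - 1) * (a - 1) = 0 := by linear_combination ha + (1 - a) * h2
        have := mul_self_eq_zero.mp h3
        exact sub_eq_zero.mp this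
      have hχ1 : ∀ t, χ i₀ t = 1 := by
        intro t
        apply hsq
        have := hτ i₀ t
        rwa [hτ0] at this
      have hχiterval : ∀ (m : ℕ) (t : ↥T), χ (σ^[m] i₀) t = χ i₀ (cT^[m] t) := by
        intro m
        induction m with
        | zero => intro t; simp
        | succ m ih =>
          intro t
          rw [Function.iterate_succ_apply', hσχ, ih, ← Function.iterate_succ_apply]
      have hall : ∀ (i : I) (t : ↥T), χ i t = 1 := by
        intro i t
        obtain ⟨m, hm⟩ := htrans i
        rw [← hm, hχiterval]
        exact hχ1 _
      obtain ⟨i1, hi1⟩ := Fintype.exists_ne_of_one_lt_card (by omega) i₀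
      obtain ⟨t, ht⟩ := hdist i1 i₀ hi1
      rw [hall i1 t, hall i₀ t] at ht
      exact ht rfl
    · rw [hmm, hq2, mul_one, hrd]
      omega
  -- τ on the enumeration
  have hτe : ∀ m : ZMod r, τ (e m) = e (m + ((r / 2 : ℕ) : ZMod r)) := by
    intro m
    rw [heval, heval, hτiter, ← hh, ← Function.iterate_add_apply]
    apply hitermod
    have hv2 : (((r / 2 : ℕ) : ZMod r)).val = (r / 2) % r := ZMod.val_natCast r _
    have hva : (m + ((r / 2 : ℕ) : ZMod r)).val = (m.val + (r / 2) % r) % r := by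
      rw [ZMod.val_add, hv2]
    rw [hva, Nat.mod_mod_of_dvd _ dvd_rfl]
    conv_lhs => rw [Nat.add_mod, hhmod]
    rw [Nat.add_mod m.val ((r/2) % r) r, Nat.mod_mod_of_dvd _ dvd_rfl,
      Nat.mod_eq_of_lt (show r / 2 < r by omega)]
  -- r/2 is nonzero in ZMod r
  have hhalf_ne : ((r / 2 : ℕ) : ZMod r) ≠ 0 := by
    intro h0
    have := (ZMod.natCast_eq_zero_iff (r / 2) r).mp h0
    have hle := Nat.le_of_dvd (by omega) this
    omega
  -- conclusions
  refine ⟨?_, ⟨s, hseq⟩, e, hprop1, ?_⟩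
  · -- total isotropy
    intro i v hv w hw
    by_contra hB
    have hpi : ∀ t, χ i t * χ i t = 1 := hBchar i i v hv w hw hB
    have hτi : τ i = i := hpairuniq i (τ i) i (hτ i) hpi
    obtain ⟨m, hm⟩ := e.surjective i
    rw [← hm] at hτi
    rw [hτe m] at hτi
    have := e.injective hτi
    have : ((r / 2 : ℕ) : ZMod r) = 0 := by
      have h1 : m + ((r / 2 : ℕ) : ZMod r) = m + 0 := by rw [add_zero]; exact this
      exact add_left_cancel h1
    exact hhalf_ne this
  · -- orthogonality
    intro m l hml v hv w hw
    by_contra hB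
    have hpi : ∀ t, χ (e m) t * χ (e l) t = 1 := hBchar (e m) (e l) v hv w hw hB
    have hτm : τ (e m) = e l := hpairuniq (e m) (τ (e m)) (e l) (hτ (e m)) hpi
    rw [hτe m] at hτm
    exact hml (e.injective hτm).symm
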